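/- Under the stated setup, the single-term debiased estimator has finite second moment given exactly by E[‖Ψ_L / p(L)‖₂²] = Σ_{l≥0} E[‖Ψ_l‖₂²] / p(l) < ∞; in particular the estimator has finite variance. -/

import Mathlib

open MeasureTheory ProbabilityTheory Filter
open scoped ENNReal
set_option maxHeartbeats 1000000

/-- The single-term debiased estimator `Ψ_L / p(L)` has finite second moment,
equal to `Σ_l E[‖Ψ_l‖²] / p(l)`; in particular it has finite variance. -/
theorem single_term_estimator_second_moment
    {Ω : Type*} [MeasurableSpace Ω] (P : Measure Ω) [IsProbabilityMeasure P]
    (d : ℕ) (hd : 1 ≤ d)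
    (Ψ : ℕ → Ω → EuclideanSpace ℝ (Fin d))
    (hmeas : ∀ l, Measurable (Ψ l))
    (hindep : iIndepFun Ψ P)
    (hL2 : ∀ l, MemLp (Ψ l) 2 P)
    (a : ℕ → EuclideanSpace ℝ (Fin d)) (A : EuclideanSpace ℝ (Fin d))
    (h0 : ∫ ω, Ψ 0 ω ∂P = a 0)
    (hinc : ∀ l, 1 ≤ l → ∫ ω, Ψ l ω ∂P = a l - a (l - 1))
    (hconv : Tendsto a atTop (nhds A))
    (p : ℕ → ℝ) (hp : ∀ l, 0 < p l) (hpsum : ∑' l, p l = 1)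
    (hsum : Summable fun l => (∫ ω, ‖Ψ l ω‖ ^ 2 ∂P) / p l)
    (L : Ω → ℕ) (hLmeas : Measurable L)
    (hLlaw : ∀ l, P {ω | L ω = l} = ENNReal.ofReal (p l))
    (hLindep : IndepFun L (fun ω l => Ψ l ω) P) :
    Integrable (fun ω => ‖(p (L ω))⁻¹ • Ψ (L ω) ω‖ ^ 2) P ∧
      ∫ ω, ‖(p (L ω))⁻¹ • Ψ (L ω) ω‖ ^ 2 ∂P = ∑' l, (∫ ω, ‖Ψ l ω‖ ^ 2 ∂P) / p l := by
  -- notation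
  set f : Ω → ℝ := fun ω => ‖(p (L ω))⁻¹ • Ψ (L ω) ω‖ ^ 2 with hf_def
  -- measurability of ω ↦ Ψ (L ω) ω
  have hcomp : Measurable fun ω => Ψ (L ω) ω := by
    have h1 : Measurable fun q : Ω × ℕ => Ψ q.2 q.1 :=
      measurable_from_prod_countable_left fun l => hmeas l
    exact h1.comp (measurable_id.prodMk hLmeas)
  have hfmeas : Measurable f := by
    apply Measurable.pow_const
    have hpL : Measurable fun ω => (p (L ω))⁻¹ :=
      (measurable_from_top (f := fun n : ℕ => (p n)⁻¹)).comp hLmeas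
    exact (hpL.smul hcomp).norm
  have hfnonneg : ∀ ω, 0 ≤ f ω := fun ω => sq_nonneg _
  -- each ‖Ψ l‖² is integrable
  have hInt : ∀ l, Integrable (fun ω => ‖Ψ l ω‖ ^ 2) P := by
    intro l
    have := (hL2 l).integrable_norm_rpow (by norm_num) (by norm_num)
    simpa [ENNReal.toReal_ofNat, Real.rpow_natCast] using this
  have hEnonneg : ∀ l, 0 ≤ ∫ ω, ‖Ψ l ω‖ ^ 2 ∂P := fun l =>
    integral_nonneg fun ω => sq_nonneg _
  have htermnn : ∀ l, 0 ≤ (∫ ω, ‖Ψ l ω‖ ^ 2 ∂P) / p l := fun l =>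
    div_nonneg (hEnonneg l) (hp l).le
  -- the key lintegral computation
  have key : ∫⁻ ω, ENNReal.ofReal (f ω) ∂P
      = ENNReal.ofReal (∑' l, (∫ ω, ‖Ψ l ω‖ ^ 2 ∂P) / p l) := by
    have hpt : ∀ ω, ENNReal.ofReal (f ω)
        = ∑' l, ({ω | L ω = l}).indicator
            (fun ω => ENNReal.ofReal (‖(p l)⁻¹ • Ψ l ω‖ ^ 2)) ω := by
      intro ω
      rw [tsum_eq_single (L ω)]
      · simp [Set.indicator_of_mem, Set.mem_setOf_eq, hf_def]
      · intro l hl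
        exact Set.indicator_of_notMem (fun h => hl (by simpa using h.symm)) _
    calc ∫⁻ ω, ENNReal.ofReal (f ω) ∂P
        = ∫⁻ ω, ∑' l, ({ω | L ω = l}).indicator
            (fun ω => ENNReal.ofReal (‖(p l)⁻¹ • Ψ l ω‖ ^ 2)) ω ∂P := by
          exact lintegral_congr hpt
      _ = ∑' l, ∫⁻ ω, ({ω | L ω = l}).indicator
            (fun ω => ENNReal.ofReal (‖(p l)⁻¹ • Ψ l ω‖ ^ 2)) ω ∂P := by
          apply lintegral_tsum
          intro l
          exact (Measurable.indicator
            ((((hmeas l).const_smul ((p l)⁻¹)).norm.pow_const 2).ennreal_ofReal)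
            (hLmeas (measurableSet_singleton l))).aemeasurable
      _ = ∑' l, ENNReal.ofReal ((∫ ω, ‖Ψ l ω‖ ^ 2 ∂P) / p l) := by
          congr 1; funext l
          -- rewrite indicator as a product of independent functions
          have hset : MeasurableSet {ω | L ω = l} := hLmeas (measurableSet_singleton l)
          set φ₁ : ℕ → ℝ≥0∞ := fun n => if n = l then 1 else 0 with hφ₁
          set φ₂ : (ℕ → EuclideanSpace ℝ (Fin d)) → ℝ≥0∞ :=
            fun g => ENNReal.ofReal (‖(p l)⁻¹ • g l‖ ^ 2) with hφ₂
          have hφ₁m : Measurable φ₁ := measurable_from_top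
          have hφ₂m : Measurable φ₂ := by
            apply Measurable.ennreal_ofReal
            exact (((measurable_pi_apply l).const_smul ((p l)⁻¹)).norm).pow_const 2
          have hprod : ∀ ω, ({ω | L ω = l}).indicator
              (fun ω => ENNReal.ofReal (‖(p l)⁻¹ • Ψ l ω‖ ^ 2)) ω
              = φ₁ (L ω) * φ₂ (fun k => Ψ k ω) := by
            intro ω
            by_cases h : L ω = l
            · simp [Set.indicator_of_mem, h, Set.mem_setOf_eq, hφ₁, hφ₂]
            · simp [Set.indicator_of_notMem, h, hφ₁, hφ₂]
          have hindep2 : IndepFun (fun ω => φ₁ (L ω)) (fun ω => φ₂ (fun k => Ψ k ω)) P :=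
            hLindep.comp hφ₁m hφ₂m
          have hmul := lintegral_mul_eq_lintegral_mul_lintegral_of_indepFun''
            (μ := P) ((hφ₁m.comp hLmeas).aemeasurable)
            ((hφ₂m.comp (measurable_pi_lambda _ fun k => hmeas k)).aemeasurable) hindep2
          simp only [Function.comp] at hmul
          rw [lintegral_congr hprod, hmul]
          -- first factor
          have h1 : ∫⁻ ω, φ₁ (L ω) ∂P = ENNReal.ofReal (p l) := by
            have : (fun ω => φ₁ (L ω))
                = ({ω | L ω = l}).indicator (1 : Ω → ℝ≥0∞) := by
              funext ω
              by_cases h : L ω = l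
              · simp [hφ₁, h, Set.indicator_of_mem, Set.mem_setOf_eq]
              · simp [hφ₁, h, Set.indicator_of_notMem]
            rw [this, lintegral_indicator_one hset, hLlaw l]
          -- second factor
          have h2 : ∫⁻ ω, φ₂ (fun k => Ψ k ω) ∂P
              = ENNReal.ofReal (((p l)⁻¹) ^ 2 * ∫ ω, ‖Ψ l ω‖ ^ 2 ∂P) := by
            have hInt' : Integrable (fun ω => ‖(p l)⁻¹ • Ψ l ω‖ ^ 2) P := by
              have := (hInt l).const_mul (((p l)⁻¹) ^ 2)
              simpa [norm_smul, mul_pow, abs_of_pos (inv_pos.mpr (hp l))] using this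
            rw [← ofReal_integral_eq_lintegral_ofReal hInt' (ae_of_all _ fun ω => sq_nonneg _)]
            congr 1
            simp_rw [norm_smul, mul_pow, norm_inv, Real.norm_eq_abs,
              abs_of_pos (hp l), integral_const_mul]
          rw [h1, h2, ← ENNReal.ofReal_mul (hp l).le]
          congr 1
          field_simp [(hp l).ne']
      _ = ENNReal.ofReal (∑' l, (∫ ω, ‖Ψ l ω‖ ^ 2 ∂P) / p l) := by
          rw [ENNReal.ofReal_tsum_of_nonneg htermnn hsum]
  have hfin : ∫⁻ ω, ENNReal.ofReal (f ω) ∂P < ⊤ := by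
    rw [key]; exact ENNReal.ofReal_lt_top
  have hint : Integrable f P := by
    refine ⟨hfmeas.aestronglyMeasurable, ?_⟩
    rw [hasFiniteIntegral_iff_ofReal (ae_of_all _ hfnonneg)]
    exact hfin
  refine ⟨hint, ?_⟩
  rw [integral_eq_lintegral_of_nonneg_ae (ae_of_all _ hfnonneg) hfmeas.aestronglyMeasurable,
    key, ENNReal.toReal_ofReal (tsum_nonneg htermnn)]
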